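/- Let α_t, σ_t be differentiable with α_t ≠ 0 and σ_t > 0. Then the conditional vector field u_t(x | x_0) = (σ_t'/σ_t) x + (α_t' − σ_t' α_t/σ_t) x_0 can be rewritten as u_t(x | x_0) = a_t x + b_t ∇_x log p_t(x | x_0), where a_t = α_t'/α_t, b_t = (α_t'/α_t − σ_t'/σ_t) σ_t², and p_t(x | x_0) = N(x; α_t x_0, σ_t² I). -/

import Mathlib

/-- Rewriting the conditional vector field via the conditional score:
`u = (σ'/σ) • x + (α' − σ'α/σ) • x₀ = a • x + b • score`, where
`a = α'/α`, `b = (α'/α − σ'/σ) σ²` and `score = −(x − α • x₀)/σ²`. -/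
theorem conditional_vector_field_score_form
    {d : ℕ} (α σ α' σ' : ℝ) (hα : α ≠ 0) (hσ : 0 < σ)
    (x x₀ : EuclideanSpace ℝ (Fin d))
    (score : EuclideanSpace ℝ (Fin d))
    (hscore : score = -(1 / σ ^ 2) • (x - α • x₀)) :
    (σ' / σ) • x + (α' - σ' * α / σ) • x₀ =
      (α' / α) • x + ((α' / α - σ' / σ) * σ ^ 2) • score := by
  subst hscore
  have hσ' : σ ≠ 0 := ne_of_gt hσ
  rw [smul_smul, smul_sub, smul_smul]
  have h1 : (α' / α - σ' / σ) * σ ^ 2 * -(1 / σ ^ 2) = -(α' / α) + σ' / σ := by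
    field_simp; ring
  have h2 : (-(α' / α) + σ' / σ) * α = -α' + σ' * α / σ := by
    field_simp
  rw [h1, h2]
  simp only [add_smul, sub_smul, neg_smul]
  abel
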